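/- Any cost-optimal basic tree representing a displacement sequence D contains at most one idx node with count 1, and for such a node there is no other idx or strc node on the path from it to the root. -/

import Mathlib

inductive TT : Type where
  | con : ℕ → TT
  | vec : ℕ → ℤ → TT → TT
  | idx : List ℤ → TT → TT
  | strc : List (ℤ × TT) → TT

theorem TT.sizeOf_snd_lt {ps : List (ℤ × TT)} (p : {x // x ∈ ps}) :
    sizeOf (p.1).2 < sizeOf (TT.strc ps) := by
  obtain ⟨⟨a, b⟩, hp⟩ := p
  have := List.sizeOf_lt_of_mem hp
  simp at this ⊢
  omega

def flatten : TT → List ℤ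
  | .con c => (List.range c).map (fun i => (i : ℤ))
  | .vec c d C => (List.range c).flatMap (fun i => (flatten C).map (· + (i : ℤ) * d))
  | .idx I C => I.flatMap (fun s => (flatten C).map (· + s))
  | .strc ps => ps.attach.flatMap (fun p => (flatten p.1.2).map (· + p.1.1))
decreasing_by
  all_goals first
  | exact TT.sizeOf_snd_lt _
  | decreasing_tactic

def cost (kc kv ki ks kl : ℕ) : TT → ℕ
  | .con _ => kc
  | .vec _ _ C => kv + cost kc kv ki ks kl C
  | .idx I C => ki + I.length * kl + cost kc kv ki ks kl C
  | .strc ps => ks + 2 * ps.length * kl + (ps.attach.map (fun p => cost kc kv ki ks kl p.1.2)).sum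
decreasing_by
  all_goals first
  | exact TT.sizeOf_snd_lt _
  | decreasing_tactic

/-- The tree contains no `idx` node with count 1 (a single index). -/
def NoIdx1 : TT → Prop
  | .con _ => True
  | .vec _ _ C => NoIdx1 C
  | .idx I C => I.length ≠ 1 ∧ NoIdx1 C
  | .strc ps => ∀ p ∈ ps.attach, NoIdx1 p.1.2
decreasing_by
  all_goals first
  | exact TT.sizeOf_snd_lt _
  | decreasing_tactic

/-- Every count-1 `idx` node has no other `idx` or `strc` node on its path to the
root; together with the tree structure this implies there is at most one such node. -/
def GoodIdx1 : TT → Prop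
  | .con _ => True
  | .vec _ _ C => GoodIdx1 C
  | .idx _ C => NoIdx1 C
  | .strc ps => ∀ p ∈ ps.attach, NoIdx1 p.1.2
decreasing_by
  all_goals first
  | exact TT.sizeOf_snd_lt _
  | decreasing_tactic

/-- `T` is a cost-optimal basic tree representing `D`
(cost model: all node constants equal to `K`, lookup cost 1). -/
def Optimal (K : ℕ) (D : List ℤ) (T : TT) : Prop :=
  flatten T = D ∧ ∀ T' : TT, flatten T' = D → cost K K K K 1 T ≤ cost K K K K 1 T'


lemma flatten_strc (ps : List (ℤ × TT)) :
    flatten (.strc ps) = ps.flatMap (fun p => (flatten p.2).map (· + p.1)) := by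
  rw [flatten]
  conv_rhs => rw [← List.attach_map_subtype_val ps]
  rw [List.flatMap_map]

lemma cost_strc (kc kv ki ks kl : ℕ) (ps : List (ℤ × TT)) :
    cost kc kv ki ks kl (.strc ps)
      = ks + 2 * ps.length * kl + (ps.map (fun p => cost kc kv ki ks kl p.2)).sum := by
  rw [cost]
  congr 1
  conv_rhs => rw [← List.attach_map_subtype_val ps]
  rw [List.map_map]
  rfl

lemma shift_shift (l : List ℤ) (a b : ℤ) :
    (l.map (· + a)).map (· + b) = l.map (· + (a + b)) := by
  rw [List.map_map]; congr 1; funext x; simp [Function.comp, add_assoc]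

lemma flatten_vec (c : ℕ) (d : ℤ) (C : TT) :
    flatten (.vec c d C) = (List.range c).flatMap (fun i => (flatten C).map (· + (i : ℤ) * d)) := by
  rw [flatten]

lemma flatten_idx (I : List ℤ) (C : TT) :
    flatten (.idx I C) = I.flatMap (fun s => (flatten C).map (· + s)) := by
  rw [flatten]

lemma noIdx1_strc_iff (ps : List (ℤ × TT)) :
    NoIdx1 (.strc ps) ↔ ∀ p ∈ ps, NoIdx1 p.2 := by
  rw [NoIdx1]
  constructor
  · intro h p hp; exact h ⟨p, hp⟩ (List.mem_attach _ _)
  · intro h p _; exact h p.1 p.2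

lemma goodIdx1_strc_iff (ps : List (ℤ × TT)) :
    GoodIdx1 (.strc ps) ↔ ∀ p ∈ ps, NoIdx1 p.2 := by
  rw [GoodIdx1]
  constructor
  · intro h p hp; exact h ⟨p, hp⟩ (List.mem_attach _ _)
  · intro h p _; exact h p.1 p.2

/-- From any tree violating `NoIdx1`, one can extract a shift `s`
while saving at least `K + 1` in cost. -/
lemma extract (K : ℕ) (C : TT) (h : ¬ NoIdx1 C) :
    ∃ (s : ℤ) (C' : TT), flatten C = (flatten C').map (· + s) ∧
      cost K K K K 1 C' + K + 1 ≤ cost K K K K 1 C := by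
  match C with
  | .con n => rw [NoIdx1] at h; exact absurd trivial h
  | .vec c d C =>
      rw [NoIdx1] at h
      obtain ⟨s, C', hf, hc⟩ := extract K C h
      refine ⟨s, .vec c d C', ?_, ?_⟩
      · rw [flatten_vec, flatten_vec, hf, List.map_flatMap]
        congr 1; funext i
        rw [shift_shift, shift_shift, add_comm]
      · rw [cost, cost]; omega
  | .idx I C =>
      rw [NoIdx1] at h
      by_cases h1 : I.length = 1
      · obtain ⟨s, hI⟩ : ∃ s, I = [s] := by
          match I, h1 with
          | [s], _ => exact ⟨s, rfl⟩
        refine ⟨s, C, ?_, ?_⟩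
        · rw [flatten_idx, hI]; simp
        · rw [cost, hI]; simp; omega
      · have h2 : ¬ NoIdx1 C := fun hc => h ⟨h1, hc⟩
        obtain ⟨s, C', hf, hc⟩ := extract K C h2
        refine ⟨s, .idx I C', ?_, ?_⟩
        · rw [flatten_idx, flatten_idx, hf, List.map_flatMap]
          congr 1; funext t
          rw [shift_shift, shift_shift, add_comm]
        · rw [cost, cost]; omega
  | .strc ps =>
      rw [noIdx1_strc_iff] at h
      push_neg at h
      obtain ⟨⟨a, C⟩, hmem, hbad⟩ := h
      obtain ⟨l1, l2, rfl⟩ := List.append_of_mem hmem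
      obtain ⟨s, C', hf, hc⟩ := extract K C hbad
      refine ⟨0, .strc (l1 ++ (a + s, C') :: l2), ?_, ?_⟩
      · rw [flatten_strc, flatten_strc]
        simp only [List.flatMap_append, List.flatMap_cons]
        rw [hf, shift_shift, add_comm s a]
        simp
      · rw [cost_strc, cost_strc]
        simp only [List.map_append, List.map_cons, List.sum_append, List.sum_cons,
          List.length_append, List.length_cons]
        omega
termination_by sizeOf C
decreasing_by
  all_goals simp_wf
  all_goals first
    | omega
    | (simp; omega)
    | (have h' : sizeOf ((a, C) : ℤ × TT) < sizeOf ps := List.sizeOf_lt_of_mem (by assumption);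
       simp at h'; omega)

/-- Any tree violating `GoodIdx1` can be replaced by a strictly cheaper tree
with the same flattening. -/
lemma reduce (K : ℕ) (T : TT) (h : ¬ GoodIdx1 T) :
    ∃ T' : TT, flatten T' = flatten T ∧ cost K K K K 1 T' < cost K K K K 1 T := by
  match T with
  | .con n => rw [GoodIdx1] at h; exact absurd trivial h
  | .vec c d C =>
      rw [GoodIdx1] at h
      obtain ⟨C', hf, hc⟩ := reduce K C h
      refine ⟨.vec c d C', ?_, ?_⟩
      · rw [flatten_vec, flatten_vec, hf]
      · rw [cost, cost]; omega
  | .idx I C =>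
      rw [GoodIdx1] at h
      obtain ⟨s, C', hf, hc⟩ := extract K C h
      refine ⟨.idx (I.map (· + s)) C', ?_, ?_⟩
      · rw [flatten_idx, flatten_idx, hf, List.flatMap_map]
        congr 1; funext t
        rw [shift_shift]
        congr 1; funext x; ring
      · rw [cost, cost]; simp; omega
  | .strc ps =>
      rw [goodIdx1_strc_iff] at h
      push_neg at h
      obtain ⟨⟨a, C⟩, hmem, hbad⟩ := h
      obtain ⟨l1, l2, rfl⟩ := List.append_of_mem hmem
      obtain ⟨s, C', hf, hc⟩ := extract K C hbad
      refine ⟨.strc (l1 ++ (a + s, C') :: l2), ?_, ?_⟩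
      · rw [flatten_strc, flatten_strc]
        simp only [List.flatMap_append, List.flatMap_cons]
        rw [hf, shift_shift, add_comm s a]
      · rw [cost_strc, cost_strc]
        simp only [List.map_append, List.map_cons, List.sum_append, List.sum_cons,
          List.length_append, List.length_cons]
        omega
termination_by sizeOf T
decreasing_by
  all_goals simp_wf
  all_goals first | omega | (simp; omega)

theorem stmt7 (K : ℕ) (hK : 0 < K) (D : List ℤ) (T : TT) (hopt : Optimal K D T) :
    GoodIdx1 T := by
  by_contra h
  obtain ⟨T', hf, hc⟩ := reduce K T h
  have := hopt.2 T' (hf.trans hopt.1)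
  omega
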